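/- Let k be a field, N ≥ 1, and let F, G be functors from the linearly ordered set Fin N (with its usual order, viewed as a category) to k-vector spaces such that every F(i) and every G(i) is finite dimensional. If dim F(i) = dim G(i) for every i, and for every pair i ≤ j the rank of the linear map F(i ≤ j) : F(i) → F(j) equals the rank of G(i ≤ j) : G(i) → G(j), then F and G are naturally isomorphic. -/

import Mathlib

open CategoryTheory

open Module LinearMap


theorem myext1 {k X V W : Type} [Field k] [AddCommGroup X] [Module k X]
    [AddCommGroup V] [Module k V] [AddCommGroup W] [Module k W]
    [FiniteDimensional k X] [FiniteDimensional k V] [FiniteDimensional k W]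
    (f : X →ₗ[k] V) (f' : X →ₗ[k] W) (V₀ : Submodule k V) (W₀ : Submodule k W)
    (e₀ : V₀ ≃ₗ[k] W₀)
    (hcompat : ∀ (x : X) (hx : f x ∈ V₀), (e₀ ⟨f x, hx⟩ : W) = f' x)
    (hmem0 : ∀ x : X, f x ∈ V₀ ↔ f' x ∈ W₀)
    (hker : LinearMap.ker f = LinearMap.ker f')
    (hVW : Module.finrank k V = Module.finrank k W) :
    ∃ α : V ≃ₗ[k] W, (∀ x, α (f x) = f' x) ∧ (∀ v : V₀, α v = e₀ v) := by
  classical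
  -- a linear section of `f` on its range
  obtain ⟨σ, hσ'⟩ := f.rangeRestrict.exists_rightInverse_of_surjective
    (LinearMap.range_rangeRestrict f)
  have hσ : ∀ r : LinearMap.range f, f (σ r) = (r : V) := by
    intro r
    have := congrArg (fun g => (g r : LinearMap.range f)) hσ'
    simpa [LinearMap.comp_apply] using congrArg (Subtype.val) this
  -- choose C₁ ≤ range f complementing V₀ ⊓ range f inside range f
  obtain ⟨C₁', hC₁'⟩ := Submodule.exists_isCompl
    (Submodule.comap (LinearMap.range f).subtype (V₀ ⊓ LinearMap.range f))
  set C₁ : Submodule k V := C₁'.map (LinearMap.range f).subtype with hC₁def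
  have hC₁R : C₁ ≤ LinearMap.range f := by
    rintro v ⟨c, hc, rfl⟩; exact c.2
  have hdisj01 : ∀ v, v ∈ V₀ → v ∈ C₁ → v = 0 := by
    rintro v hv0 ⟨c, hc, rfl⟩
    have hmem : c ∈ Submodule.comap (LinearMap.range f).subtype (V₀ ⊓ LinearMap.range f) :=
      ⟨hv0, c.2⟩
    have := hC₁'.symm.disjoint.le_bot ⟨hc, hmem⟩
    simpa using congrArg Subtype.val this
  have hsup : V₀ ⊔ C₁ = V₀ ⊔ LinearMap.range f := by
    apply le_antisymm
    · exact sup_le_sup_left hC₁R _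
    · rw [sup_le_iff]
      refine ⟨le_sup_left, ?_⟩
      intro r hr
      obtain ⟨a, ha, b, hb, hab⟩ := Submodule.mem_sup.1
        (hC₁'.codisjoint.eq_top ▸ Submodule.mem_top (x := (⟨r, hr⟩ : LinearMap.range f)))
      have : r = (a : V) + (b : V) := by
        simpa using congrArg Subtype.val hab.symm
      rw [this]
      exact Submodule.add_mem_sup ha.1 ⟨b, hb, rfl⟩
  obtain ⟨C₂, hC₂⟩ := Submodule.exists_isCompl (V₀ ⊔ C₁)
  obtain ⟨C₂', hC₂'⟩ := Submodule.exists_isCompl (W₀ ⊔ LinearMap.range f')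
  -- dimension bookkeeping
  have hrr' : finrank k (LinearMap.range f) = finrank k (LinearMap.range f') := by
    have h1 := LinearMap.finrank_range_add_finrank_ker f
    have h2 := LinearMap.finrank_range_add_finrank_ker f'
    rw [hker] at h1
    omega
  have hVW₀ : finrank k V₀ = finrank k W₀ := e₀.finrank_eq
  have hinf : finrank k (V₀ ⊓ LinearMap.range f : Submodule k V)
      = finrank k (W₀ ⊓ LinearMap.range f' : Submodule k W) := by
    have kf : LinearMap.ker f ≤ Submodule.comap f V₀ := by
      intro x hx
      simp [LinearMap.mem_ker.1 hx]
    have kf' : LinearMap.ker f' ≤ Submodule.comap f' W₀ := by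
      intro x hx
      simp [LinearMap.mem_ker.1 hx]
    have hPP : Submodule.comap f V₀ = Submodule.comap f' W₀ := by
      ext x; exact hmem0 x
    have e1 : finrank k (Submodule.map f (Submodule.comap f V₀))
        + finrank k (LinearMap.ker f) = finrank k (Submodule.comap f V₀) := by
      have := LinearMap.finrank_range_add_finrank_ker (f.domRestrict (Submodule.comap f V₀))
      rwa [LinearMap.range_domRestrict, LinearMap.ker_domRestrict,
        (Submodule.comapSubtypeEquivOfLe kf).finrank_eq] at this
    have e2 : finrank k (Submodule.map f' (Submodule.comap f' W₀))
        + finrank k (LinearMap.ker f') = finrank k (Submodule.comap f' W₀) := by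
      have := LinearMap.finrank_range_add_finrank_ker (f'.domRestrict (Submodule.comap f' W₀))
      rwa [LinearMap.range_domRestrict, LinearMap.ker_domRestrict,
        (Submodule.comapSubtypeEquivOfLe kf').finrank_eq] at this
    rw [Submodule.map_comap_eq] at e1 e2
    rw [hker, hPP] at e1
    rw [inf_comm V₀, inf_comm W₀]
    omega
  have hsupd : finrank k (V₀ ⊔ LinearMap.range f : Submodule k V)
      = finrank k (W₀ ⊔ LinearMap.range f' : Submodule k W) := by
    have h1 := Submodule.finrank_sup_add_finrank_inf_eq V₀ (LinearMap.range f)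
    have h2 := Submodule.finrank_sup_add_finrank_inf_eq W₀ (LinearMap.range f')
    omega
  have hC₂dim : finrank k C₂ = finrank k C₂' := by
    have h1 := Submodule.finrank_add_eq_of_isCompl hC₂
    have h2 := Submodule.finrank_add_eq_of_isCompl hC₂'
    rw [hsup] at h1
    omega
  obtain ⟨g₂⟩ := FiniteDimensional.nonempty_linearEquiv_of_finrank_eq hC₂dim
  -- the three-fold complementary structure
  have hIC0 : IsCompl V₀ (C₁ ⊔ C₂) := by
    constructor
    · rw [disjoint_iff_inf_le]
      rintro v ⟨hv0, hv12⟩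
      obtain ⟨c₁, hc₁, c₂, hc₂, rfl⟩ := Submodule.mem_sup.1 hv12
      have hc₂' : c₂ ∈ (V₀ ⊔ C₁) ⊓ C₂ :=
        ⟨by
          have : c₂ = (c₁ + c₂) - c₁ := by abel
          rw [this]
          exact Submodule.sub_mem _ (Submodule.mem_sup_left hv0) (Submodule.mem_sup_right hc₁),
         hc₂⟩
      have hc₂0 : c₂ = 0 := by
        simpa using hC₂.disjoint.le_bot hc₂'
      subst hc₂0
      have : c₁ = 0 := hdisj01 c₁ (by simpa using hv0) hc₁
      simp [this]
    · rw [codisjoint_iff, ← sup_assoc]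
      exact hC₂.codisjoint.eq_top
  have hIC1 : IsCompl C₁ (V₀ ⊔ C₂) := by
    constructor
    · rw [disjoint_iff_inf_le]
      rintro v ⟨hv1, hv02⟩
      obtain ⟨a, ha, c₂, hc₂, rfl⟩ := Submodule.mem_sup.1 hv02
      have hc₂' : c₂ ∈ (V₀ ⊔ C₁) ⊓ C₂ :=
        ⟨by
          have : c₂ = (a + c₂) - a := by abel
          rw [this]
          exact Submodule.sub_mem _ (Submodule.mem_sup_right hv1) (Submodule.mem_sup_left ha),
         hc₂⟩
      have hc₂0 : c₂ = 0 := by simpa using hC₂.disjoint.le_bot hc₂'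
      subst hc₂0
      rw [add_zero] at hv1 ⊢
      have : a = 0 := hdisj01 a ha hv1
      simp [this]
    · rw [codisjoint_iff]
      have : C₁ ⊔ (V₀ ⊔ C₂) = (V₀ ⊔ C₁) ⊔ C₂ := by ac_rfl
      rw [this]
      exact hC₂.codisjoint.eq_top
  -- define α
  set π₀ := Submodule.projectionOnto V₀ (C₁ ⊔ C₂) hIC0 with hπ₀
  set π₁ := Submodule.projectionOnto C₁ (V₀ ⊔ C₂) hIC1 with hπ₁
  set π₂ := Submodule.projectionOnto C₂ (V₀ ⊔ C₁) hC₂.symm with hπ₂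
  set g₁ : C₁ →ₗ[k] W := f' ∘ₗ σ ∘ₗ (Submodule.inclusion hC₁R) with hg₁
  set α : V →ₗ[k] W :=
    W₀.subtype ∘ₗ (e₀ : V₀ →ₗ[k] W₀) ∘ₗ π₀ + g₁ ∘ₗ π₁ + C₂'.subtype ∘ₗ (g₂ : C₂ →ₗ[k] C₂') ∘ₗ π₂
    with hα
  have happly : ∀ (v₀ c₁ c₂ : V) (h₀ : v₀ ∈ V₀) (h₁ : c₁ ∈ C₁) (h₂ : c₂ ∈ C₂),
      α (v₀ + c₁ + c₂)
        = (e₀ ⟨v₀, h₀⟩ : W) + g₁ ⟨c₁, h₁⟩ + (g₂ ⟨c₂, h₂⟩ : W) := by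
    intro v₀ c₁ c₂ h₀ h₁ h₂
    have p0 : π₀ (v₀ + c₁ + c₂) = ⟨v₀, h₀⟩ := by
      rw [map_add, map_add]
      rw [Submodule.linearProjOfIsCompl_apply_left hIC0 ⟨v₀, h₀⟩]
      rw [Submodule.linearProjOfIsCompl_apply_right' hIC0 (x := c₁) (Submodule.mem_sup_left h₁)]
      rw [Submodule.linearProjOfIsCompl_apply_right' hIC0 (x := c₂) (Submodule.mem_sup_right h₂)]
      simp
    have p1 : π₁ (v₀ + c₁ + c₂) = ⟨c₁, h₁⟩ := by
      rw [map_add, map_add]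
      rw [Submodule.linearProjOfIsCompl_apply_left hIC1 ⟨c₁, h₁⟩]
      rw [Submodule.linearProjOfIsCompl_apply_right' hIC1 (x := v₀) (Submodule.mem_sup_left h₀)]
      rw [Submodule.linearProjOfIsCompl_apply_right' hIC1 (x := c₂) (Submodule.mem_sup_right h₂)]
      simp
    have p2 : π₂ (v₀ + c₁ + c₂) = ⟨c₂, h₂⟩ := by
      rw [map_add, map_add]
      rw [Submodule.linearProjOfIsCompl_apply_left hC₂.symm ⟨c₂, h₂⟩]
      rw [Submodule.linearProjOfIsCompl_apply_right' hC₂.symm (x := v₀) (Submodule.mem_sup_left h₀)]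
      rw [Submodule.linearProjOfIsCompl_apply_right' hC₂.symm (x := c₁) (Submodule.mem_sup_right h₁)]
      simp
    rw [hα]
    simp only [LinearMap.add_apply, LinearMap.comp_apply, p0, p1, p2]
    rfl
  -- decomposition of an arbitrary vector
  have hdecomp : ∀ v : V, ∃ (v₀ c₁ c₂ : V) (h₀ : v₀ ∈ V₀) (h₁ : c₁ ∈ C₁) (h₂ : c₂ ∈ C₂),
      v = v₀ + c₁ + c₂ := by
    intro v
    have hv : v ∈ (V₀ ⊔ C₁) ⊔ C₂ := by rw [hC₂.codisjoint.eq_top]; trivial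
    obtain ⟨u, hu, c₂, hc₂, rfl⟩ := Submodule.mem_sup.1 hv
    obtain ⟨v₀, h₀, c₁, h₁, rfl⟩ := Submodule.mem_sup.1 hu
    exact ⟨v₀, c₁, c₂, h₀, h₁, hc₂, rfl⟩
  -- α intertwines f and f'
  have hαf : ∀ x, α (f x) = f' x := by
    intro x
    have hfx : f x ∈ V₀ ⊔ C₁ := by
      rw [hsup]
      exact Submodule.mem_sup_right ⟨x, rfl⟩
    obtain ⟨a, ha, c, hc, hfx'⟩ := Submodule.mem_sup.1 hfx
    have : f x = a + c + 0 := by rw [add_zero, ← hfx']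
    rw [this, happly a c 0 ha hc (Submodule.zero_mem C₂)]
    have hgz : (g₂ ⟨0, Submodule.zero_mem C₂⟩ : W) = 0 := by
      have : (⟨0, Submodule.zero_mem C₂⟩ : C₂) = 0 := rfl
      rw [this, map_zero]; rfl
    rw [hgz, add_zero]
    -- now use the section
    set y : X := σ (Submodule.inclusion hC₁R ⟨c, hc⟩) with hy
    have hfy : f y = c := hσ _
    have haxy : f (x - y) = a := by
      rw [map_sub, hfy, ← hfx']; abel
    have hax : a ∈ V₀ := ha
    have := hcompat (x - y) (by rw [haxy]; exact ha)
    have heq : (e₀ ⟨a, ha⟩ : W) = f' (x - y) := by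
      rw [← this]
      exact congrArg _ (congrArg e₀ (Subtype.ext haxy.symm))
    rw [heq, hg₁]
    simp only [LinearMap.comp_apply]
    rw [← hy, map_sub]
    abel
  have hα₀ : ∀ v : V₀, α v = e₀ v := by
    intro v
    have : (v : V) = (v : V) + 0 + 0 := by abel
    rw [this, happly (v : V) 0 0 v.2 (Submodule.zero_mem C₁) (Submodule.zero_mem C₂)]
    have h1 : (⟨0, Submodule.zero_mem C₁⟩ : C₁) = 0 := rfl
    have h2 : (⟨0, Submodule.zero_mem C₂⟩ : C₂) = 0 := rfl
    rw [h1, h2, map_zero, map_zero]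
    simp
  -- injectivity
  have hinj : Function.Injective α := by
    rw [← LinearMap.ker_eq_bot, LinearMap.ker_eq_bot']
    intro v hv
    obtain ⟨v₀, c₁, c₂, h₀, h₁, h₂, rfl⟩ := hdecomp v
    rw [happly v₀ c₁ c₂ h₀ h₁ h₂] at hv
    -- the C₂' component vanishes
    have hW1 : (e₀ ⟨v₀, h₀⟩ : W) + g₁ ⟨c₁, h₁⟩ ∈ W₀ ⊔ LinearMap.range f' := by
      apply Submodule.add_mem
      · exact Submodule.mem_sup_left (e₀ ⟨v₀, h₀⟩).2
      · apply Submodule.mem_sup_right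
        rw [hg₁]; exact ⟨_, rfl⟩
    have hg₂mem : (g₂ ⟨c₂, h₂⟩ : W) ∈ (W₀ ⊔ LinearMap.range f') ⊓ C₂' := by
      constructor
      · have : (g₂ ⟨c₂, h₂⟩ : W) = -((e₀ ⟨v₀, h₀⟩ : W) + g₁ ⟨c₁, h₁⟩) := by
          rw [eq_neg_iff_add_eq_zero, add_comm]; exact hv
        rw [this]
        exact Submodule.neg_mem _ hW1
      · exact (g₂ ⟨c₂, h₂⟩).2
    have hg₂0 : (g₂ ⟨c₂, h₂⟩ : W) = 0 := by
      simpa using hC₂'.disjoint.le_bot hg₂mem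
    have hc₂0 : c₂ = 0 := by
      have : (⟨c₂, h₂⟩ : C₂) = 0 := by
        apply g₂.injective
        exact Subtype.ext (by simpa using hg₂0)
      simpa using congrArg Subtype.val this
    rw [hg₂0, add_zero] at hv
    -- the C₁ component vanishes
    have hf'W₀ : f' (σ (Submodule.inclusion hC₁R ⟨c₁, h₁⟩)) ∈ W₀ := by
      have : g₁ ⟨c₁, h₁⟩ = -(e₀ ⟨v₀, h₀⟩ : W) := by
        rw [eq_neg_iff_add_eq_zero, add_comm]; exact hv
      rw [hg₁] at this
      simp only [LinearMap.comp_apply] at this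
      rw [this]
      exact Submodule.neg_mem _ (e₀ ⟨v₀, h₀⟩).2
    have hfV₀ : f (σ (Submodule.inclusion hC₁R ⟨c₁, h₁⟩)) ∈ V₀ := (hmem0 _).2 hf'W₀
    have hfc : f (σ (Submodule.inclusion hC₁R ⟨c₁, h₁⟩)) = c₁ := hσ _
    rw [hfc] at hfV₀
    have hc₁0 : c₁ = 0 := hdisj01 c₁ hfV₀ h₁
    subst hc₁0
    have : g₁ (⟨0, h₁⟩ : C₁) = 0 := by
      have : (⟨0, h₁⟩ : C₁) = 0 := rfl
      rw [this, map_zero]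
    rw [this, add_zero] at hv
    have : (⟨v₀, h₀⟩ : V₀) = 0 := by
      apply e₀.injective
      exact Subtype.ext (by simpa using hv)
    have hv₀0 : v₀ = 0 := by simpa using congrArg Subtype.val this
    rw [hv₀0, hc₂0]; abel
  have hbij : Function.Bijective α :=
    ⟨hinj, (LinearMap.injective_iff_surjective_of_finrank_eq_finrank hVW).1 hinj⟩
  refine ⟨LinearEquiv.ofBijective α hbij, ?_, ?_⟩
  · intro x; exact hαf x
  · intro v; exact hα₀ v


theorem myflag (k : Type) [Field k] (M : ℕ) :
    ∀ (X V W : Type) [AddCommGroup X] [Module k X] [AddCommGroup V] [Module k V]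
      [AddCommGroup W] [Module k W],
      ∀ [FiniteDimensional k X] [FiniteDimensional k V] [FiniteDimensional k W],
      ∀ (f : X →ₗ[k] V) (f' : X →ₗ[k] W)
        (A : ℕ → Submodule k V) (B : ℕ → Submodule k W),
        Monotone A → Monotone B → A M = ⊤ → B M = ⊤ →
        LinearMap.ker f = LinearMap.ker f' →
        (∀ x j, f x ∈ A j ↔ f' x ∈ B j) →
        (∀ j, finrank k (A j) = finrank k (B j)) →
        ∃ α : V ≃ₗ[k] W, (∀ x, α (f x) = f' x) ∧
          ∀ j, (A j).map (α : V →ₗ[k] W) = B j := by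
  induction M with
  | zero =>
    intro X V W _ _ _ _ _ _ _ _ _ f f' A B hA hB hAtop hBtop hker hmem hd
    have hAj : ∀ j, A j = ⊤ := fun j => top_le_iff.1 (hAtop ▸ hA (Nat.zero_le j))
    have hBj : ∀ j, B j = ⊤ := fun j => top_le_iff.1 (hBtop ▸ hB (Nat.zero_le j))
    have hVW : finrank k V = finrank k W := by
      have := hd 0
      rw [hAtop, hBtop, finrank_top, finrank_top] at this
      exact this
    have e₀ : (⊥ : Submodule k V) ≃ₗ[k] (⊥ : Submodule k W) := by
      refine FiniteDimensional.nonempty_linearEquiv_of_finrank_eq ?_ |>.some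
      simp
    obtain ⟨α, hα1, -⟩ := myext1 f f' ⊥ ⊥ e₀
      (by
        intro x hx
        have h0 : f x = 0 := hx
        have : x ∈ LinearMap.ker f' := hker ▸ LinearMap.mem_ker.2 h0
        have hf'0 : f' x = 0 := this
        rw [hf'0]
        exact (e₀ ⟨f x, hx⟩).2)
      (by
        intro x
        constructor
        · intro hx
          have : x ∈ LinearMap.ker f' := hker ▸ LinearMap.mem_ker.2 hx
          exact this
        · intro hx
          have : x ∈ LinearMap.ker f := hker.symm ▸ LinearMap.mem_ker.2 hx
          exact this)
      hker hVW
    refine ⟨α, hα1, fun j => ?_⟩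
    rw [hAj j, hBj j, Submodule.map_top, LinearEquiv.range]
  | succ M ih =>
    intro X V W _ _ _ _ _ _ _ _ _ f f' A B hA hB hAtop hBtop hker hmem hd
    -- restrict everything to A M / B M
    set P : Submodule k X := Submodule.comap f (A M) with hP
    have hPf' : ∀ x : P, f' (x : X) ∈ B M := fun x => (hmem x M).1 x.2
    set f₀ : P →ₗ[k] (A M) := (f.domRestrict P).codRestrict (A M) (fun x => x.2) with hf₀
    set f'₀ : P →ₗ[k] (B M) := (f'.domRestrict P).codRestrict (B M) hPf' with hf'₀
    set A₀ : ℕ → Submodule k (A M) := fun j => Submodule.comap (A M).subtype (A j) with hA₀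
    set B₀ : ℕ → Submodule k (B M) := fun j => Submodule.comap (B M).subtype (B j) with hB₀
    obtain ⟨α₀, hα₀f, hα₀flag⟩ := ih P (A M) (B M) f₀ f'₀ A₀ B₀
      (fun i j hij => Submodule.comap_mono (hA hij))
      (fun i j hij => Submodule.comap_mono (hB hij))
      (Submodule.comap_subtype_self _)
      (Submodule.comap_subtype_self _)
      (by
        ext x
        simp only [LinearMap.mem_ker]
        constructor
        · intro hx
          have : f (x : X) = 0 := by
            have := congrArg (Subtype.val) hx
            exact this
          have : (x : X) ∈ LinearMap.ker f' := hker ▸ LinearMap.mem_ker.2 this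
          exact Subtype.ext this
        · intro hx
          have : f' (x : X) = 0 := by
            have := congrArg (Subtype.val) hx
            exact this
          have : (x : X) ∈ LinearMap.ker f := hker.symm ▸ LinearMap.mem_ker.2 this
          exact Subtype.ext this)
      (by
        intro x j
        simp only [hA₀, hB₀, Submodule.mem_comap, Submodule.coe_subtype]
        exact hmem (x : X) j)
      (by
        intro j
        rcases le_or_gt j M with hj | hj
        · rw [(Submodule.comapSubtypeEquivOfLe (hA hj)).finrank_eq,
            (Submodule.comapSubtypeEquivOfLe (hB hj)).finrank_eq]
          exact hd j
        · have h1 : A₀ j = ⊤ := by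
            rw [eq_top_iff]
            intro x _
            exact hA hj.le x.2
          have h2 : B₀ j = ⊤ := by
            rw [eq_top_iff]
            intro x _
            exact hB hj.le x.2
          rw [h1, h2, finrank_top, finrank_top]
          exact hd M)
    -- extend over the whole space
    have hVW : finrank k V = finrank k W := by
      have := hd (M + 1)
      rw [hAtop, hBtop, finrank_top, finrank_top] at this
      exact this
    obtain ⟨α, hαf, hα0⟩ := myext1 f f' (A M) (B M) α₀
      (by
        intro x hx
        have hxP : x ∈ P := hx
        have := hα₀f ⟨x, hxP⟩
        have hcast : f₀ ⟨x, hxP⟩ = ⟨f x, hx⟩ := rfl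
        rw [hcast] at this
        have := congrArg Subtype.val this
        exact this)
      (fun x => hmem x M)
      hker hVW
    refine ⟨α, hαf, fun j => ?_⟩
    rcases le_or_gt j M with hj | hj
    · apply le_antisymm
      · rintro w ⟨v, hv, rfl⟩
        have hvM : v ∈ A M := hA hj hv
        have h1 : α v = (α₀ ⟨v, hvM⟩ : W) := hα0 ⟨v, hvM⟩
        have h2 : (⟨v, hvM⟩ : A M) ∈ A₀ j := hv
        have h3 : α₀ ⟨v, hvM⟩ ∈ B₀ j := by
          rw [← hα₀flag j]
          exact ⟨⟨v, hvM⟩, h2, rfl⟩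
        show α v ∈ B j
        rw [h1]
        exact h3
      · intro w hw
        have hwM : w ∈ B M := hB hj hw
        have h2 : (⟨w, hwM⟩ : B M) ∈ B₀ j := hw
        rw [← hα₀flag j] at h2
        obtain ⟨a, ha, haw⟩ := h2
        refine ⟨(a : V), ha, ?_⟩
        show α (a : V) = w
        have h1 : α (a : V) = (α₀ a : W) := hα0 a
        have haw' : (α₀ a : B M) = ⟨w, hwM⟩ := haw
        rw [h1, haw']
    · have h1 : A j = ⊤ := top_le_iff.1 (hAtop ▸ hA hj)
      have h2 : B j = ⊤ := top_le_iff.1 (hBtop ▸ hB hj)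
      rw [h1, h2, Submodule.map_top, LinearEquiv.range]


/-- A pointwise finite-dimensional poset module over the finite linear order
`Fin N` is determined up to natural isomorphism by the dimensions of its values
and the ranks of its structure maps. -/
theorem linear_poset_module_iso_of_rank_eq
    (k : Type) [Field k] (N : ℕ) (hN : 1 ≤ N)
    (F G : Fin N ⥤ ModuleCat.{0} k)
    (hFfin : ∀ i : Fin N, FiniteDimensional k (F.obj i))
    (hGfin : ∀ i : Fin N, FiniteDimensional k (G.obj i))
    (hdim : ∀ i : Fin N, Module.finrank k (F.obj i) = Module.finrank k (G.obj i))
    (hrank : ∀ (i j : Fin N) (h : i ≤ j),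
      Module.finrank k (LinearMap.range (F.map (homOfLE h)).hom)
        = Module.finrank k (LinearMap.range (G.map (homOfLE h)).hom)) :
    Nonempty (F ≅ G) := by
  classical
  -- functoriality of application
  have hFcomp : ∀ (i t t' : Fin N) (h : i ≤ t) (h' : t ≤ t') (x : F.obj i),
      F.map (homOfLE (h.trans h')) x = F.map (homOfLE h') (F.map (homOfLE h) x) := by
    intro i t t' h h' x
    rw [← homOfLE_comp h h', F.map_comp]
    rfl
  have hGcomp : ∀ (i t t' : Fin N) (h : i ≤ t) (h' : t ≤ t') (x : G.obj i),
      G.map (homOfLE (h.trans h')) x = G.map (homOfLE h') (G.map (homOfLE h) x) := by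
    intro i t t' h h' x
    rw [← homOfLE_comp h h', G.map_comp]
    rfl
  have hFcongr : ∀ (i : Fin N) (t t' : Fin N), t = t' → ∀ (h : i ≤ t) (h' : i ≤ t')
      (x : F.obj i), (F.map (homOfLE h) x = 0 ↔ F.map (homOfLE h') x = 0) := by
    rintro i t _ rfl h h' x
    exact Iff.rfl
  have hGcongr : ∀ (i : Fin N) (t t' : Fin N), t = t' → ∀ (h : i ≤ t) (h' : i ≤ t')
      (x : G.obj i), (G.map (homOfLE h) x = 0 ↔ G.map (homOfLE h') x = 0) := by
    rintro i t _ rfl h h' x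
    exact Iff.rfl
  -- the kernel flags
  set KF : ∀ i : Fin N, ℕ → Submodule k (F.obj i) := fun i j =>
    if h : j < N then LinearMap.ker (F.map (homOfLE (le_max_left i ⟨j, h⟩))).hom else ⊤ with hKFdef
  set KG : ∀ i : Fin N, ℕ → Submodule k (G.obj i) := fun i j =>
    if h : j < N then LinearMap.ker (G.map (homOfLE (le_max_left i ⟨j, h⟩))).hom else ⊤ with hKGdef
  have hKFmem : ∀ (i : Fin N) (j : ℕ) (hj : j < N) (h : i ≤ ⟨j, hj⟩) (x : F.obj i),
      x ∈ KF i j ↔ F.map (homOfLE h) x = 0 := by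
    intro i j hj h x
    simp only [hKFdef]
    rw [dif_pos hj, LinearMap.mem_ker]
    exact hFcongr i _ _ (max_eq_right h) _ h x
  have hKGmem : ∀ (i : Fin N) (j : ℕ) (hj : j < N) (h : i ≤ ⟨j, hj⟩) (x : G.obj i),
      x ∈ KG i j ↔ G.map (homOfLE h) x = 0 := by
    intro i j hj h x
    simp only [hKGdef]
    rw [dif_pos hj, LinearMap.mem_ker]
    exact hGcongr i _ _ (max_eq_right h) _ h x
  have hKFmem' : ∀ (i : Fin N) (j : ℕ) (hj : j < N), (⟨j, hj⟩ : Fin N) ≤ i →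
      ∀ x : F.obj i, (x ∈ KF i j ↔ x = 0) := by
    intro i j hj h x
    simp only [hKFdef]
    rw [dif_pos hj, LinearMap.mem_ker]
    rw [hFcongr i _ _ (max_eq_left h) _ (le_refl i) x]
    have hid : (homOfLE (le_refl i) : i ⟶ i) = 𝟙 i := Subsingleton.elim _ _
    rw [hid, F.map_id]
    simp
  have hKGmem' : ∀ (i : Fin N) (j : ℕ) (hj : j < N), (⟨j, hj⟩ : Fin N) ≤ i →
      ∀ x : G.obj i, (x ∈ KG i j ↔ x = 0) := by
    intro i j hj h x
    simp only [hKGdef]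
    rw [dif_pos hj, LinearMap.mem_ker]
    rw [hGcongr i _ _ (max_eq_left h) _ (le_refl i) x]
    have hid : (homOfLE (le_refl i) : i ⟶ i) = 𝟙 i := Subsingleton.elim _ _
    rw [hid, G.map_id]
    simp
  have hKFtop : ∀ (i : Fin N) (j : ℕ), N ≤ j → KF i j = ⊤ := by
    intro i j hj
    simp only [hKFdef]
    rw [dif_neg (by omega)]
  have hKGtop : ∀ (i : Fin N) (j : ℕ), N ≤ j → KG i j = ⊤ := by
    intro i j hj
    simp only [hKGdef]
    rw [dif_neg (by omega)]
  have hKFmono : ∀ i : Fin N, Monotone (KF i) := by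
    intro i j j' hjj
    rcases lt_or_ge j' N with hj' | hj'
    · have hj : j < N := by omega
      intro x hx
      simp only [hKFdef, dif_pos hj, dif_pos hj', LinearMap.mem_ker] at hx ⊢
      have htt : max i (⟨j, hj⟩ : Fin N) ≤ max i ⟨j', hj'⟩ :=
        max_le_max le_rfl (by rw [Fin.mk_le_mk]; exact hjj)
      show F.map (homOfLE ((le_max_left i ⟨j, hj⟩).trans htt)) x = 0
      rw [hFcomp _ _ _ (le_max_left i ⟨j, hj⟩) htt x, hx, map_zero]
    · rw [hKFtop i j' hj']
      exact le_top
  have hKGmono : ∀ i : Fin N, Monotone (KG i) := by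
    intro i j j' hjj
    rcases lt_or_ge j' N with hj' | hj'
    · have hj : j < N := by omega
      intro x hx
      simp only [hKGdef, dif_pos hj, dif_pos hj', LinearMap.mem_ker] at hx ⊢
      have htt : max i (⟨j, hj⟩ : Fin N) ≤ max i ⟨j', hj'⟩ :=
        max_le_max le_rfl (by rw [Fin.mk_le_mk]; exact hjj)
      show G.map (homOfLE ((le_max_left i ⟨j, hj⟩).trans htt)) x = 0
      rw [hGcomp _ _ _ (le_max_left i ⟨j, hj⟩) htt x, hx, map_zero]
    · rw [hKGtop i j' hj']
      exact le_top
  have hKdim : ∀ (i : Fin N) (j : ℕ),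
      Module.finrank k (KF i j) = Module.finrank k (KG i j) := by
    intro i j
    haveI := hFfin i; haveI := hGfin i
    rcases lt_or_ge j N with hj | hj
    · have eKF : KF i j = LinearMap.ker (F.map (homOfLE (le_max_left i ⟨j, hj⟩))).hom := dif_pos hj
      have eKG : KG i j = LinearMap.ker (G.map (homOfLE (le_max_left i ⟨j, hj⟩))).hom := dif_pos hj
      rw [eKF, eKG]
      have h1 := LinearMap.finrank_range_add_finrank_ker
        ((F.map (homOfLE (le_max_left i ⟨j, hj⟩))).hom : F.obj i →ₗ[k] F.obj (max i ⟨j, hj⟩))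
      have h2 := LinearMap.finrank_range_add_finrank_ker
        ((G.map (homOfLE (le_max_left i ⟨j, hj⟩))).hom : G.obj i →ₗ[k] G.obj (max i ⟨j, hj⟩))
      have h3 := hrank i (max i ⟨j, hj⟩) (le_max_left i ⟨j, hj⟩)
      have h4 := hdim i
      omega
    · rw [hKFtop i j hj, hKGtop i j hj, finrank_top, finrank_top]
      exact hdim i
  -- base isomorphisms
  have hbase : ∀ i : Fin N, ∃ e : F.obj i ≃ₗ[k] G.obj i,
      ∀ j, (KF i j).map (e : F.obj i →ₗ[k] G.obj i) = KG i j := by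
    intro i
    haveI := hFfin i; haveI := hGfin i
    obtain ⟨α, -, hflag⟩ := myflag k N (F.obj i) (F.obj i) (G.obj i)
      (0 : F.obj i →ₗ[k] F.obj i) (0 : F.obj i →ₗ[k] G.obj i) (KF i) (KG i)
      (hKFmono i) (hKGmono i) (hKFtop i N le_rfl) (hKGtop i N le_rfl)
      (by rw [LinearMap.ker_zero, LinearMap.ker_zero])
      (by
        intro x j
        simp only [LinearMap.zero_apply]
        exact ⟨fun _ => Submodule.zero_mem _, fun _ => Submodule.zero_mem _⟩)
      (hKdim i)
    exact ⟨α, hflag⟩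
  -- inductive step
  have hstep : ∀ (i m : Fin N), (m : ℕ) = (i : ℕ) + 1 →
      ∀ ei : F.obj i ≃ₗ[k] G.obj i,
      (∀ j, (KF i j).map (ei : F.obj i →ₗ[k] G.obj i) = KG i j) →
      ∃ em : F.obj m ≃ₗ[k] G.obj m,
        (∀ j, (KF m j).map (em : F.obj m →ₗ[k] G.obj m) = KG m j) ∧
        ∀ (h : i ≤ m) (x : F.obj i),
          em (F.map (homOfLE h) x) = G.map (homOfLE h) (ei x) := by
    intro i m him ei hgood
    haveI := hFfin i; haveI := hGfin i; haveI := hFfin m; haveI := hGfin m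
    have hle : i ≤ m := by rw [Fin.le_def]; omega
    set f : F.obj i →ₗ[k] F.obj m := (F.map (homOfLE hle)).hom with hf
    set f' : F.obj i →ₗ[k] G.obj m :=
      ((G.map (homOfLE hle)).hom : G.obj i →ₗ[k] G.obj m) ∘ₗ (ei : F.obj i →ₗ[k] G.obj i) with hf'
    have hmemiff : ∀ (j : ℕ) (x : F.obj i), x ∈ KF i j ↔ ei x ∈ KG i j := by
      intro j x
      constructor
      · intro hx
        rw [← hgood j]
        exact ⟨x, hx, rfl⟩
      · intro hx
        rw [← hgood j] at hx
        obtain ⟨y, hy, hyx⟩ := hx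
        have : y = x := ei.injective hyx
        subst this
        exact hy
    have hmle : i ≤ (⟨(m : ℕ), m.isLt⟩ : Fin N) := hle
    have hkerf : ∀ x : F.obj i, f x = 0 ↔ x ∈ KF i (m : ℕ) := by
      intro x
      rw [hKFmem i (m : ℕ) m.isLt hmle x]
    have hkerf' : ∀ x : F.obj i, f' x = 0 ↔ x ∈ KF i (m : ℕ) := by
      intro x
      rw [hmemiff (m : ℕ) x, hKGmem i (m : ℕ) m.isLt hmle (ei x)]
      exact Iff.rfl
    have hkers : LinearMap.ker f = LinearMap.ker f' := by
      ext x
      rw [LinearMap.mem_ker, LinearMap.mem_ker, hkerf x, ← hkerf' x]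
    obtain ⟨em, hnat, hflag⟩ := myflag k N (F.obj i) (F.obj m) (G.obj m) f f'
      (KF m) (KG m) (hKFmono m) (hKGmono m) (hKFtop m N le_rfl) (hKGtop m N le_rfl)
      hkers
      (by
        intro x j
        rcases lt_or_ge j N with hj | hj
        · rcases le_total m ⟨j, hj⟩ with hmj | hjm
          · rw [hKFmem m j hj hmj (f x), hKGmem m j hj hmj (f' x)]
            have e1 : F.map (homOfLE hmj) (f x)
                = F.map (homOfLE (hle.trans hmj)) x := (hFcomp i m _ hle hmj x).symm
            have e2 : G.map (homOfLE hmj) (f' x)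
                = G.map (homOfLE (hle.trans hmj)) (ei x) := (hGcomp i m _ hle hmj (ei x)).symm
            rw [e1, e2]
            rw [← hKFmem i j hj (hle.trans hmj) x, ← hKGmem i j hj (hle.trans hmj) (ei x)]
            exact hmemiff j x
          · rw [hKFmem' m j hj hjm (f x), hKGmem' m j hj hjm (f' x)]
            rw [hkerf x, ← hkerf' x]
        · rw [hKFtop m j hj, hKGtop m j hj]
          exact ⟨fun _ => Submodule.mem_top, fun _ => Submodule.mem_top⟩)
      (hKdim m)
    refine ⟨em, hflag, ?_⟩
    intro h x
    exact hnat x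
  -- build the family of isomorphisms by induction
  have hfam : ∀ n : ℕ, n < N → ∃ e : ∀ m : Fin N, F.obj m ≃ₗ[k] G.obj m,
      (∀ (m : Fin N) (j : ℕ), (KF m j).map ((e m) : F.obj m →ₗ[k] G.obj m) = KG m j) ∧
      (∀ i m : Fin N, (m : ℕ) = (i : ℕ) + 1 → (m : ℕ) ≤ n → ∀ (h : i ≤ m) (x : F.obj i),
        (e m) (F.map (homOfLE h) x) = G.map (homOfLE h) ((e i) x)) := by
    intro n
    induction n with
    | zero =>
      intro _
      refine ⟨fun m => (hbase m).choose, fun m => (hbase m).choose_spec, ?_⟩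
      intro i m him hm0
      omega
    | succ n ihn =>
      intro hn1
      obtain ⟨e, hegood, hecompat⟩ := ihn (by omega)
      set e' : ∀ m : Fin N, F.obj m ≃ₗ[k] G.obj m := fun m =>
        if h : (m : ℕ) = n + 1 then
          (hstep ⟨n, by omega⟩ m h (e ⟨n, by omega⟩)
            (hegood ⟨n, by omega⟩)).choose
        else e m with he'
      refine ⟨e', ?_, ?_⟩
      · intro m j
        by_cases h : (m : ℕ) = n + 1
        · simp only [he', dif_pos h]
          exact (hstep ⟨n, by omega⟩ m h (e ⟨n, by omega⟩)
            (hegood ⟨n, by omega⟩)).choose_spec.1 j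
        · simp only [he', dif_neg h]
          exact hegood m j
      · intro i m him hmn h x
        by_cases hc : (m : ℕ) = n + 1
        · have hi : (i : ℕ) ≠ n + 1 := by omega
          have hieq : i = (⟨n, Nat.lt_of_succ_lt hn1⟩ : Fin N) := by
            apply Fin.ext
            show (i : ℕ) = n
            omega
          simp only [he', dif_pos hc, dif_neg hi]
          subst hieq
          exact (hstep _ m hc (e _) (hegood _)).choose_spec.2 h x
        · have hi : (i : ℕ) ≠ n + 1 := by omega
          simp only [he', dif_neg hc, dif_neg hi]
          exact hecompat i m him (by omega) h x
  obtain ⟨e, hegood, hecompat⟩ := hfam (N - 1) (by omega)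
  -- naturality for all pairs
  have hnatall : ∀ (d : ℕ) (i m : Fin N), (m : ℕ) = (i : ℕ) + d → ∀ (h : i ≤ m) (x : F.obj i),
      e m (F.map (homOfLE h) x) = G.map (homOfLE h) (e i x) := by
    intro d
    induction d with
    | zero =>
      intro i m hdm h x
      have : i = m := Fin.ext (by omega)
      subst this
      have hid : (homOfLE h : i ⟶ i) = 𝟙 i := Subsingleton.elim _ _
      rw [hid, F.map_id, G.map_id]
      rfl
    | succ d ihd =>
      intro i m hdm h x
      have hin : (i : ℕ) + d < N := by omega
      set p : Fin N := ⟨(i : ℕ) + d, hin⟩ with hp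
      have h1 : i ≤ p := by rw [Fin.le_def]; simp [hp]
      have h2 : p ≤ m := by rw [Fin.le_def]; simp [hp]; omega
      have step1 : e m (F.map (homOfLE h) x)
          = e m (F.map (homOfLE h2) (F.map (homOfLE h1) x)) :=
        congrArg _ (hFcomp i p m h1 h2 x)
      have step2 : e m (F.map (homOfLE h2) (F.map (homOfLE h1) x))
          = G.map (homOfLE h2) (e p (F.map (homOfLE h1) x)) :=
        hecompat p m (by show (m : ℕ) = (i : ℕ) + d + 1; omega) (by omega) h2
          (F.map (homOfLE h1) x)
      have step3 : e p (F.map (homOfLE h1) x) = G.map (homOfLE h1) (e i x) :=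
        ihd i p (by show ((i : ℕ) + d) = (i : ℕ) + d; rfl) h1 x
      have step4 : G.map (homOfLE h2) (G.map (homOfLE h1) (e i x))
          = G.map (homOfLE h) (e i x) := (hGcomp i p m h1 h2 (e i x)).symm
      exact step1.trans (step2.trans ((congrArg _ step3).trans step4))
  -- assemble the natural isomorphism
  refine ⟨NatIso.ofComponents (fun i => (e i).toModuleIso) ?_⟩
  intro i m φ
  have hle : i ≤ m := leOfHom φ
  have : φ = homOfLE hle := Subsingleton.elim _ _
  subst this
  apply ModuleCat.hom_ext
  apply LinearMap.ext
  intro x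
  show e m (F.map (homOfLE hle) x) = G.map (homOfLE hle) (e i x)
  exact hnatall ((m : ℕ) - (i : ℕ)) i m (by omega) hle x
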